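/- Let d, ℓ ≥ 1, e ∈ {0,…,d−1}, and let σ = σ_{d,ℓ,e} be the permutation of ℕ defined by σ(r(dℓ) + sd + t) = r(dℓ) + sd + ((t + re) mod d) for r ∈ ℕ, s ∈ {0,…,ℓ−1}, t ∈ {0,…,d−1}. For a d-symbol S let σ(S) = s_d(σ(s_d^{-1}(S))) be its (ℓ,e)-twist. Then the multiset of lengths a − b of the long hooks (those with a > b) of σ(S) equals the multiset of lengths of the long hooks of S: 𝓗_{>0}(σ(S)) = 𝓗_{>0}(S). -/
import Mathlib


/-- `X^{+s} = (X + s) ∪ {0,…,s−1}` for a β-set `X`. -/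
def shiftUp (X : Finset ℕ) (s : ℕ) : Finset ℕ :=
  X.image (· + s) ∪ Finset.range s

/-- The `d`-symbol `s_d(X)` associated to a β-set `X`:
`X_i^{(d)} = {k ∈ ℕ : i + k*d ∈ X}`. -/
def sd (d : ℕ) (X : Finset ℕ) : Fin d → Finset ℕ :=
  fun i => (X.filter fun a => a % d = (i : ℕ)).image fun a => a / d

/-- The inverse of `s_d`, recovering the β-set of a `d`-symbol. -/
def sdInv (d : ℕ) (S : Fin d → Finset ℕ) : Finset ℕ :=
  Finset.univ.biUnion fun i => (S i).image fun k => (i : ℕ) + k * d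

/-- Hooks of a β-set `X`: pairs `(a,b)` with `a > b`, `a ∈ X`, `b ∉ X`. -/
def betaHooks (X : Finset ℕ) : Finset (ℕ × ℕ) :=
  (X ×ˢ Finset.range (X.sup id + 1)).filter fun p => p.2 < p.1 ∧ p.2 ∉ X

/-- Hooks of a `d`-symbol `S`: quadruples `(a,b,i,j)` with `a ∈ S i`, `b ∉ S j`,
and either `a > b`, or `a = b` and `i > j`. -/
def symbolHooks {d : ℕ} (S : Fin d → Finset ℕ) : Finset (ℕ × ℕ × Fin d × Fin d) :=
  (Finset.range ((Finset.univ.sup fun i => (S i).sup id) + 1) ×ˢ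
      Finset.range ((Finset.univ.sup fun i => (S i).sup id) + 1) ×ˢ
      (Finset.univ : Finset (Fin d)) ×ˢ (Finset.univ : Finset (Fin d))).filter
    fun z => z.1 ∈ S z.2.2.1 ∧ z.2.1 ∉ S z.2.2.2 ∧
      (z.2.1 < z.1 ∨ (z.1 = z.2.1 ∧ z.2.2.2 < z.2.2.1))

/-- The partition `p(X)` of a β-set `X = {a_1 > … > a_t}`, as the multiset of the
nonzero numbers among `a_i − (t−i)`; the element `a` contributes the part
`a − #{b ∈ X : b < a}`. -/
def partitionOf (X : Finset ℕ) : Multiset ℕ :=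
  Multiset.filter (· ≠ 0) (X.val.map fun a => a - (X.filter (· < a)).card)

/-- `r`, the maximal number of parts among the partitions `p(X_i)` of a `d`-symbol. -/
def quotCard {d : ℕ} (S : Fin d → Finset ℕ) : ℕ :=
  Finset.univ.sup fun i => Multiset.card (partitionOf (S i))

/-- `Y` is the balanced quotient `Q(S)` of `S`: each `Y i` is the (unique) β-set of
cardinality `r` with `p(Y i) = p(S i)`, where `r` is the maximal number of parts
among the `p(S i)`. -/
def IsBalancedQuotient {d : ℕ} (S Y : Fin d → Finset ℕ) : Prop :=
  ∀ i, (Y i).card = quotCard S ∧ partitionOf (Y i) = partitionOf (S i)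

/-- The core `C(S) = ([x_0],…,[x_{d−1}])` of a `d`-symbol, `x_i = |X_i|`. -/
def coreSymbol {d : ℕ} (S : Fin d → Finset ℕ) : Fin d → Finset ℕ :=
  fun i => Finset.range (S i).card

/-- The `δ`-length `k(a−b) + c_i − c_j` of a hook `(a,b,i,j)`, for the
`d`-hook data tuple `δ = (c_0,…,c_{d−1};k)`. -/
noncomputable def hookLen {d : ℕ} (c : Fin d → ℝ) (k : ℝ)
    (z : ℕ × ℕ × Fin d × Fin d) : ℝ :=
  k * ((z.1 - z.2.1 : ℕ) : ℝ) + c z.2.2.1 - c z.2.2.2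

/-- The multiset `𝓗^δ(S)` of `δ`-lengths of all hooks of `S`. -/
noncomputable def hookLens {d : ℕ} (c : Fin d → ℝ) (k : ℝ)
    (S : Fin d → Finset ℕ) : Multiset ℝ :=
  (symbolHooks S).val.map (hookLen c k)

/-- `H_{ij}^ℓ(S)`, the set of hooks `(a,b,i,j)` of `S` with `a − b = ℓ`. -/
def Hij {d : ℕ} (S : Fin d → Finset ℕ) (i j : Fin d) (ℓ : ℕ) :
    Finset (ℕ × ℕ × Fin d × Fin d) :=
  (symbolHooks S).filter fun z => z.2.2.1 = i ∧ z.2.2.2 = j ∧ z.1 - z.2.1 = ℓ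

/-- The sign-modified length `h̄^{δ_S}` (on hooks of the balanced quotient), where
`x` records the cardinalities `x_i = |X_i|` of `S`, and `δ_S = (c_i + x_i k; k)`.
For a hook `z = (a,b,u,v)` with `ℓ = a − b`: relabelling so that `Δ = x_i − x_j ≥ 0`,
the sign is `+` if `z` lies in position `(i,j)`, or in position `(j,i)` with `ℓ > Δ`,
or in position `(j,i)` with `ℓ = Δ` and `i < j`; otherwise the sign is `−`. -/
noncomputable def signedLen {d : ℕ} (x : Fin d → ℕ) (c : Fin d → ℝ) (k : ℝ)
    (z : ℕ × ℕ × Fin d × Fin d) : ℝ :=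
  if x z.2.2.2 ≤ x z.2.2.1 then
    k * ((z.1 - z.2.1 : ℕ) : ℝ) + (c z.2.2.1 + (x z.2.2.1 : ℝ) * k)
      - (c z.2.2.2 + (x z.2.2.2 : ℝ) * k)
  else if x z.2.2.2 - x z.2.2.1 < z.1 - z.2.1 ∨
      (z.1 - z.2.1 = x z.2.2.2 - x z.2.2.1 ∧ (z.2.2.2 : ℕ) < (z.2.2.1 : ℕ)) then
    k * ((z.1 - z.2.1 : ℕ) : ℝ) + (c z.2.2.1 + (x z.2.2.1 : ℝ) * k)
      - (c z.2.2.2 + (x z.2.2.2 : ℝ) * k)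
  else
    -(k * ((z.1 - z.2.1 : ℕ) : ℝ) + (c z.2.2.1 + (x z.2.2.1 : ℝ) * k)
      - (c z.2.2.2 + (x z.2.2.2 : ℝ) * k))

/-- The permutation `σ_{d,ℓ,e}` of `ℕ`:
`σ(r(dℓ) + sd + t) = r(dℓ) + sd + ((t + re) mod d)`. -/
def twistFun (d ℓ e : ℕ) (n : ℕ) : ℕ :=
  d * ℓ * (n / (d * ℓ)) + d * (n % (d * ℓ) / d) + (n % d + n / (d * ℓ) * e) % d

lemma tf_eq (d ℓ e n : ℕ) :
    twistFun d ℓ e n = d * (n / d) + (n % d + (n / d / ℓ) * e) % d := by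
  unfold twistFun
  rw [Nat.mod_mul_right_div_self, ← Nat.div_div_eq_div_mul]
  have h : ℓ * (n / d / ℓ) + n / d % ℓ = n / d := Nat.div_add_mod (n / d) ℓ
  have h2 : d * ℓ * (n / d / ℓ) + d * (n / d % ℓ) = d * (n / d) := by
    calc d * ℓ * (n / d / ℓ) + d * (n / d % ℓ)
        = d * (ℓ * (n / d / ℓ) + n / d % ℓ) := by ring
      _ = d * (n / d) := by rw [h]
  omega

lemma tf_div (d ℓ e n : ℕ) (hd : 0 < d) : twistFun d ℓ e n / d = n / d := by
  rw [tf_eq, Nat.mul_add_div hd]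
  have h1 : (n % d + n / d / ℓ * e) % d < d := Nat.mod_lt _ hd
  rw [Nat.div_eq_of_lt h1, add_zero]

lemma tf_mod (d ℓ e n : ℕ) : twistFun d ℓ e n % d = (n % d + n / d / ℓ * e) % d := by
  rw [tf_eq, Nat.mul_add_mod, Nat.mod_mod_of_dvd _ (dvd_refl d)]

lemma tf_tf (d ℓ e1 e2 n : ℕ) (hd : 0 < d) (he : e1 + e2 = d) :
    twistFun d ℓ e2 (twistFun d ℓ e1 n) = n := by
  rw [tf_eq d ℓ e2, tf_div d ℓ e1 n hd, tf_mod]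
  have h1 : ((n % d + n / d / ℓ * e1) % d + n / d / ℓ * e2) % d = n % d := by
    rw [Nat.mod_add_mod, add_assoc, ← Nat.mul_add, he,
      Nat.add_mul_mod_self_right, Nat.mod_mod_of_dvd _ (dvd_refl d)]
  rw [h1]
  exact Nat.div_add_mod n d

lemma mem_sd {d : ℕ} (hd : 0 < d) (X : Finset ℕ) (i : Fin d) (a : ℕ) :
    a ∈ sd d X i ↔ (i : ℕ) + a * d ∈ X := by
  simp only [sd, Finset.mem_image, Finset.mem_filter]
  constructor
  · rintro ⟨x, ⟨hx, hmod⟩, hdiv⟩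
    have h2 := Nat.div_add_mod x d
    rw [hmod, hdiv] at h2
    have hx' : (i : ℕ) + a * d = x := by rw [← h2]; ring
    rwa [hx']
  · intro h
    refine ⟨(i : ℕ) + a * d, ⟨h, ?_⟩, ?_⟩
    · rw [Nat.add_mul_mod_self_right, Nat.mod_eq_of_lt i.isLt]
    · rw [Nat.add_mul_div_right _ _ hd, Nat.div_eq_of_lt i.isLt, zero_add]

lemma mem_hooks {d : ℕ} (hd : 0 < d) (X : Finset ℕ) (z : ℕ × ℕ × Fin d × Fin d) :
    z ∈ (symbolHooks (sd d X)).filter (fun z => z.2.1 < z.1) ↔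
      ((z.2.2.1 : ℕ) + z.1 * d ∈ X ∧ (z.2.2.2 : ℕ) + z.2.1 * d ∉ X ∧ z.2.1 < z.1) := by
  obtain ⟨a, b, i, j⟩ := z
  simp only [symbolHooks, Finset.mem_filter, Finset.mem_product, Finset.mem_range,
    Finset.mem_univ, and_true, true_and, mem_sd hd]
  constructor
  · rintro ⟨⟨_, h1, h2, _⟩, h3⟩
    exact ⟨h1, h2, h3⟩
  · rintro ⟨h1, h2, h3⟩
    have ha : a ∈ sd d X i := (mem_sd hd X i a).2 h1
    have hle : a ≤ (Finset.univ.sup fun i => ((sd d X) i).sup id) := by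
      calc a ≤ ((sd d X) i).sup id := Finset.le_sup (f := id) ha
        _ ≤ _ := Finset.le_sup (f := fun i => ((sd d X) i).sup id) (Finset.mem_univ i)
    exact ⟨⟨⟨by omega, by omega⟩, h1, h2, Or.inl h3⟩, h3⟩

def phi {d : ℕ} (hd : 0 < d) (σ : ℕ → ℕ) (z : ℕ × ℕ × Fin d × Fin d) :
    ℕ × ℕ × Fin d × Fin d :=
  (z.1, z.2.1, ⟨σ ((z.2.2.1 : ℕ) + z.1 * d) % d, Nat.mod_lt _ hd⟩,
    ⟨σ ((z.2.2.2 : ℕ) + z.2.1 * d) % d, Nat.mod_lt _ hd⟩)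

lemma split_aux {d : ℕ} (hd : 0 < d) (σ : ℕ → ℕ) (hdiv : ∀ n, σ n / d = n / d)
    (i : Fin d) (a : ℕ) :
    σ ((i : ℕ) + a * d) % d + a * d = σ ((i : ℕ) + a * d) := by
  have h1 : ((i : ℕ) + a * d) / d = a := by
    rw [Nat.add_mul_div_right _ _ hd, Nat.div_eq_of_lt i.isLt, zero_add]
  conv_rhs => rw [← Nat.mod_add_div' (σ ((i : ℕ) + a * d)) d]
  rw [hdiv, h1]

lemma Qmap {d : ℕ} (hd : 0 < d) (σ : ℕ → ℕ) (hinj : Function.Injective σ)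
    (hdiv : ∀ n, σ n / d = n / d) (X : Finset ℕ) (z : ℕ × ℕ × Fin d × Fin d)
    (hz : z ∈ (symbolHooks (sd d X)).filter (fun z => z.2.1 < z.1)) :
    phi hd σ z ∈ (symbolHooks (sd d (X.image σ))).filter (fun z => z.2.1 < z.1) := by
  rw [mem_hooks hd] at hz ⊢
  obtain ⟨h1, h2, h3⟩ := hz
  refine ⟨?_, ?_, h3⟩
  · show σ ((z.2.2.1 : ℕ) + z.1 * d) % d + z.1 * d ∈ X.image σ
    rw [split_aux hd σ hdiv]
    exact Finset.mem_image_of_mem σ h1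
  · show σ ((z.2.2.2 : ℕ) + z.2.1 * d) % d + z.2.1 * d ∉ X.image σ
    rw [split_aux hd σ hdiv]
    intro hmem
    obtain ⟨v, hv, hveq⟩ := Finset.mem_image.1 hmem
    exact h2 (hinj hveq ▸ hv)

lemma phi_phi {d : ℕ} (hd : 0 < d) (σ τ : ℕ → ℕ) (hτσ : ∀ n, τ (σ n) = n)
    (hdiv : ∀ n, σ n / d = n / d) (z : ℕ × ℕ × Fin d × Fin d) :
    phi hd τ (phi hd σ z) = z := by
  obtain ⟨a, b, i, j⟩ := z
  simp only [phi, Prod.mk.injEq]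
  refine ⟨trivial, trivial, ?_, ?_⟩ <;>
  · apply Fin.ext
    simp only
    rw [split_aux hd σ hdiv, hτσ, Nat.add_mul_mod_self_right, Nat.mod_eq_of_lt (Fin.isLt _)]

lemma key {d : ℕ} (hd : 0 < d) (σ τ : ℕ → ℕ)
    (hτσ : ∀ n, τ (σ n) = n) (hστ : ∀ n, σ (τ n) = n)
    (hdivσ : ∀ n, σ n / d = n / d) (X : Finset ℕ) :
    ((symbolHooks (sd d (X.image σ))).filter (fun z => z.2.1 < z.1)).val.map
        (fun z => z.1 - z.2.1) =
      ((symbolHooks (sd d X)).filter (fun z => z.2.1 < z.1)).val.map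
        (fun z => z.1 - z.2.1) := by
  have hinjσ : Function.Injective σ := Function.LeftInverse.injective hτσ
  have hinjτ : Function.Injective τ := Function.LeftInverse.injective hστ
  have hdivτ : ∀ n, τ n / d = n / d := by
    intro n
    conv_rhs => rw [← hστ n]
    rw [hdivσ]
  have hXτ : (X.image σ).image τ = X := by
    rw [Finset.image_image]
    have : (τ ∘ σ) = id := funext hτσ
    rw [this, Finset.image_id]
  have hBA : (symbolHooks (sd d (X.image σ))).filter (fun z => z.2.1 < z.1) =
      ((symbolHooks (sd d X)).filter (fun z => z.2.1 < z.1)).image (phi hd σ) := by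
    ext z
    constructor
    · intro hz
      rw [Finset.mem_image]
      refine ⟨phi hd τ z, ?_, phi_phi hd τ σ hστ hdivτ z⟩
      have := Qmap hd τ hinjτ hdivτ (X.image σ) z hz
      rwa [hXτ] at this
    · rintro hz
      rw [Finset.mem_image] at hz
      obtain ⟨w, hw, rfl⟩ := hz
      exact Qmap hd σ hinjσ hdivσ X w hw
  rw [hBA, Finset.image_val_of_injOn
    (Function.Injective.injOn (Function.LeftInverse.injective (phi_phi hd σ τ hτσ hdivσ))),
    Multiset.map_map]
  rfl

lemma sd_sdInv {d : ℕ} (hd : 0 < d) (S : Fin d → Finset ℕ) : sd d (sdInv d S) = S := by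
  funext i
  ext a
  rw [mem_sd hd]
  simp only [sdInv, Finset.mem_biUnion, Finset.mem_univ, true_and, Finset.mem_image]
  constructor
  · rintro ⟨i', k, hk, heq⟩
    have hmod := congrArg (· % d) heq
    simp only [Nat.add_mul_mod_self_right, Nat.mod_eq_of_lt i'.isLt,
      Nat.mod_eq_of_lt i.isLt] at hmod
    have hkd : k * d = a * d := by omega
    have hk' : k = a := Nat.eq_of_mul_eq_mul_right hd hkd
    have hi' : i' = i := Fin.ext hmod
    rwa [← hi', ← hk']
  · intro h
    exact ⟨i, a, h, rfl⟩

/-- The multiset of lengths of the long hooks of the `(ℓ,e)`-twist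
`σ(S) = s_d(σ(s_d⁻¹(S)))` of a `d`-symbol `S` equals the multiset of lengths of the
long hooks of `S`. -/
theorem twist_long_hooks_eq (d : ℕ) (hd : 0 < d) (ℓ : ℕ) (hℓ : 0 < ℓ)
    (e : ℕ) (he : e < d) (S : Fin d → Finset ℕ) :
    ((symbolHooks (sd d ((sdInv d S).image (twistFun d ℓ e)))).filter
        (fun z => z.2.1 < z.1)).val.map (fun z => z.1 - z.2.1) =
      ((symbolHooks S).filter (fun z => z.2.1 < z.1)).val.map (fun z => z.1 - z.2.1) := by
  rw [key hd (twistFun d ℓ e) (twistFun d ℓ (d - e))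
    (fun n => tf_tf d ℓ e (d - e) n hd (by omega))
    (fun n => tf_tf d ℓ (d - e) e n hd (by omega))
    (fun n => tf_div d ℓ e n hd), sd_sdInv hd]
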